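/- Let Λ₊, Λ₋, Λ₀ be complex numbers, θ = ((Λ₀/2)² - Λ₊Λ₋)^{1/2} with θ ≠ 0 and cosh(θ) + (Λ₀/(2θ))sinh(θ) ≠ 0. Define B₊ = (Λ₊/θ)sinh(θ)/(cosh(θ) + (Λ₀/(2θ))sinh(θ)), B₋ analogously with Λ₋, and B₀ = (cosh(θ) + (Λ₀/(2θ))sinh(θ))². Then in the 2×2 matrix representation K₊ = [[0,1],[0,0]], K₋ = [[0,0],[-1,0]], K₀ = (1/2)[[1,0],[0,-1]], the antinormal-order decomposition exp(Λ₊K₊ + Λ₀K₀ + Λ₋K₋) = exp(B₋K₋) · exp(ln(B₀)K₀) · exp(B₊K₊) holds. -/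

import Mathlib

open Matrix Complex

lemma exp_of_sq_zero (N : Matrix (Fin 2) (Fin 2) ℂ) (h : N ^ 2 = 0) :
    NormedSpace.exp N = 1 + N := by
  simp only [NormedSpace.exp_eq_tsum (𝕂 := ℂ)]
  rw [tsum_eq_sum (s := {0, 1}) ?_]
  · simp
  · intro n hn
    obtain ⟨k, rfl⟩ : ∃ k, n = 2 + k := ⟨n - 2, by
      simp only [Finset.mem_insert, Finset.mem_singleton] at hn; omega⟩
    rw [pow_add, h, zero_mul, smul_zero]

lemma exp_of_sq (A : Matrix (Fin 2) (Fin 2) ℂ) (θ : ℂ) (hθ0 : θ ≠ 0)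
    (h : A ^ 2 = θ ^ 2 • 1) :
    NormedSpace.exp A = Complex.cosh θ • 1 + (Complex.sinh θ / θ) • A := by
  simp only [NormedSpace.exp_eq_tsum (𝕂 := ℂ)]
  have heven : ∀ k : ℕ, A ^ (2 * k) = θ ^ (2 * k) • (1 : Matrix (Fin 2) (Fin 2) ℂ) := by
    intro k
    rw [pow_mul, h, smul_pow, one_pow, ← pow_mul]
  have hS : HasSum (fun n : ℕ => ((n.factorial : ℂ))⁻¹ • A ^ n)
      (Complex.cosh θ • 1 + (Complex.sinh θ / θ) • A) := by
    refine HasSum.even_add_odd ?_ ?_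
    · have := (Complex.hasSum_cosh θ).smul_const (1 : Matrix (Fin 2) (Fin 2) ℂ)
      convert this using 2 with k
      rw [heven k, smul_smul, div_eq_mul_inv, mul_comm]
    · have := ((Complex.hasSum_sinh θ).div_const θ).smul_const A
      convert this using 2 with k
      have hodd : A ^ (2 * k + 1) = θ ^ (2 * k) • A := by
        rw [pow_succ, heven k, smul_mul_assoc, one_mul]
      rw [hodd, smul_smul]
      congr 1
      rw [pow_succ, div_div, mul_comm (((2 * k + 1).factorial : ℂ)) θ, ← div_div,
        mul_div_assoc, div_self hθ0, mul_one, div_eq_inv_mul]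
  exact hS.tsum_eq

set_option maxHeartbeats 1600000 in
/-- Ban's antinormal-order decomposition formula for `exp(Λ₊K₊ + Λ₀K₀ + Λ₋K₋)` in the
faithful 2×2 representation of 𝔰𝔲(1,1); the middle factor `exp(ln(B₀)K₀)` is taken as
the diagonal matrix `diag(B₀^{1/2}, B₀^{-1/2})` with
`B₀^{1/2} = cosh θ + (Λ₀/(2θ)) sinh θ`. -/
theorem su11_antinormal_order_decomposition
    (Λp Λm Λ0 θ : ℂ)
    (hθ : θ ^ 2 = (Λ0 / 2) ^ 2 - Λp * Λm)
    (hθ0 : θ ≠ 0)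
    (hd : Complex.cosh θ + (Λ0 / (2 * θ)) * Complex.sinh θ ≠ 0)
    (Kp Km K0 : Matrix (Fin 2) (Fin 2) ℂ)
    (hKp : Kp = !![0, 1; 0, 0])
    (hKm : Km = !![0, 0; -1, 0])
    (hK0 : K0 = (1/2 : ℂ) • !![1, 0; 0, -1])
    (Bp Bm B0h : ℂ)
    (hBp : Bp = (Λp / θ) * Complex.sinh θ /
      (Complex.cosh θ + (Λ0 / (2 * θ)) * Complex.sinh θ))
    (hBm : Bm = (Λm / θ) * Complex.sinh θ /
      (Complex.cosh θ + (Λ0 / (2 * θ)) * Complex.sinh θ))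
    (hB0h : B0h = Complex.cosh θ + (Λ0 / (2 * θ)) * Complex.sinh θ) :
    NormedSpace.exp (Λp • Kp + Λ0 • K0 + Λm • Km) =
      NormedSpace.exp (Bm • Km) * !![B0h, 0; 0, B0h⁻¹] *
        NormedSpace.exp (Bp • Kp) := by
  subst hKp hKm hK0
  have hcs : Complex.cosh θ ^ 2 - Complex.sinh θ ^ 2 = 1 := Complex.cosh_sq_sub_sinh_sq θ
  have hM : Λp • !![0, 1; 0, 0] + Λ0 • ((1/2 : ℂ) • !![1, 0; 0, -1]) +
      Λm • !![0, 0; -1, 0] = !![Λ0/2, Λp; -Λm, -Λ0/2] := by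
    ext i j
    fin_cases i <;> fin_cases j <;> simp <;> ring
  have hM2 : (!![Λ0/2, Λp; -Λm, -Λ0/2] : Matrix (Fin 2) (Fin 2) ℂ) ^ 2 = θ ^ 2 • 1 := by
    rw [pow_two]
    ext i j
    fin_cases i <;> fin_cases j <;>
      simp [Matrix.mul_apply, Fin.sum_univ_succ, Matrix.one_apply] <;>
      first
      | linear_combination -hθ
      | ring
  have hKm2 : ((Bm • !![0, 0; -1, 0]) : Matrix (Fin 2) (Fin 2) ℂ) ^ 2 = 0 := by
    rw [pow_two]
    ext i j
    fin_cases i <;> fin_cases j <;> simp [Matrix.mul_apply, Fin.sum_univ_succ]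
  have hKp2 : ((Bp • !![0, 1; 0, 0]) : Matrix (Fin 2) (Fin 2) ℂ) ^ 2 = 0 := by
    rw [pow_two]
    ext i j
    fin_cases i <;> fin_cases j <;> simp [Matrix.mul_apply, Fin.sum_univ_succ]
  rw [hM, exp_of_sq _ θ hθ0 hM2, exp_of_sq_zero _ hKm2, exp_of_sq_zero _ hKp2]
  have hB0h' : B0h ≠ 0 := by rw [hB0h]; exact hd
  have hd2 : Complex.cosh θ * (2 * θ) + Λ0 * Complex.sinh θ ≠ 0 := by
    intro h
    apply hd
    have e : Complex.cosh θ + Λ0 / (2 * θ) * Complex.sinh θ =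
        (Complex.cosh θ * (2 * θ) + Λ0 * Complex.sinh θ) / (2 * θ) := by
      field_simp
    rw [e, h, zero_div]
  ext i j
  fin_cases i <;> fin_cases j <;>
    simp [Matrix.mul_apply, Fin.sum_univ_succ, Matrix.one_apply]
  · rw [hB0h]; field_simp
  · rw [hBp, hB0h]; field_simp [hd2]
    rw [mul_div_cancel_right₀ _ (by contrapose! hd2; linear_combination hd2)]
  · rw [hBm, hB0h]; field_simp [hd2]
    rw [mul_div_cancel_right₀ _ (by contrapose! hd2; linear_combination hd2)]
  · rw [hBp, hBm, hB0h]
    field_simp [hd2]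
    rw [eq_div_iff (by contrapose! hd2; linear_combination hd2)]
    linear_combination (4 * θ ^ 2) * hcs + (4 * Complex.sinh θ ^ 2) * hθ
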